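/- Suppose additionally that G is convex and each f_i is μ_{f_i}-strongly convex. Let x∈ℝ^{n_1}×⋯×ℝ^{n_N}, z=T(x), and for I⊆{1,…,N} let x_I^+ agree with z on coordinates in I and with x elsewhere. For probability weights (q_I) with ∑_{I∋i} q_I ≥ p_i > 0 for each i, it holds that ∑_I q_I·(φ_Γ(x_I^+) − min Φ) ≤ (1−c)(φ_Γ(x) − min Φ), where c = min_{i}{ξ_i p_i/γ_i} / max_{i}{(N − γ_i μ_{f_i})/(γ_i² μ_{f_i})} and ξ_i = (N − γ_i L_{f_i})/N. Consequently, the FBE contracts Q-linearly in conditional expectation along the randomized block-coordinate forward-backward algorithm. -/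

import Mathlib

open Filter Topology Metric Bornology Set
open scoped RealInnerProductSpace

noncomputable section

variable {N : ℕ} {E : Fin N → Type*}
  [∀ i, NormedAddCommGroup (E i)] [∀ i, InnerProductSpace ℝ (E i)]
  [∀ i, CompleteSpace (E i)]

/-- `F(x) = (1/N) ∑ᵢ fᵢ(xᵢ)`, the smooth separable part of the cost. -/
def Fsum (f : ∀ i, E i → ℝ) (x : PiLp 2 E) : ℝ := (N : ℝ)⁻¹ * ∑ i, f i (x i)

/-- `Φ = F + G`, the total cost, extended-real-valued. -/
def Phi (f : ∀ i, E i → ℝ) (G : PiLp 2 E → EReal) (x : PiLp 2 E) : EReal :=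
  ((Fsum f x : ℝ) : EReal) + G x

/-- The model `M(w,x) = F(x) + ⟨∇F(x),w-x⟩ + G(w) + ½‖w-x‖²_{Γ⁻¹}`, where `∇F(x)ᵢ = f'ᵢ(xᵢ)/N`
and `Γ = blockdiag(γ₁ I, …, γ_N I)`. -/
def Mdl (f : ∀ i, E i → ℝ) (f' : ∀ i, E i → E i) (γ : Fin N → ℝ)
    (G : PiLp 2 E → EReal) (w x : PiLp 2 E) : EReal :=
  ((Fsum f x + (N : ℝ)⁻¹ * ∑ i, ⟪f' i (x i), w i - x i⟫
      + 2⁻¹ * ∑ i, (γ i)⁻¹ * ‖w i - x i‖ ^ 2 : ℝ) : EReal) + G w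

/-- The forward-backward operator `T(x) = argmin_w M(w,x)`. -/
def Tmap (f : ∀ i, E i → ℝ) (f' : ∀ i, E i → E i) (γ : Fin N → ℝ)
    (G : PiLp 2 E → EReal) (x : PiLp 2 E) : Set (PiLp 2 E) :=
  {z | ∀ w, Mdl f f' γ G z x ≤ Mdl f f' γ G w x}

/-- The `Γ⁻¹`-proximal mapping
`prox_G^{Γ⁻¹}(u) = argmin_w { G(w) + ½‖w-u‖²_{Γ⁻¹} }`. -/
def proxSet (γ : Fin N → ℝ) (G : PiLp 2 E → EReal) (u : PiLp 2 E) : Set (PiLp 2 E) :=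
  {z | ∀ w, G z + ((2⁻¹ * ∑ i, (γ i)⁻¹ * ‖z i - u i‖ ^ 2 : ℝ) : EReal)
        ≤ G w + ((2⁻¹ * ∑ i, (γ i)⁻¹ * ‖w i - u i‖ ^ 2 : ℝ) : EReal)}

/-- The forward (gradient) step `x - Γ∇F(x)`. -/
def fwd (f' : ∀ i, E i → E i) (γ : Fin N → ℝ) (x : PiLp 2 E) : PiLp 2 E :=
  WithLp.toLp 2 (fun i => x i - (γ i * (N : ℝ)⁻¹) • f' i (x i))

/-- Convexity for an extended-real-valued function. -/
def ERealConvex {X : Type*} [AddCommMonoid X] [Module ℝ X] (G : X → EReal) : Prop :=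
  ∀ x y : X, ∀ a b : ℝ, 0 ≤ a → 0 ≤ b → a + b = 1 →
    G (a • x + b • y) ≤ (a : ℝ) * G x + (b : ℝ) * G y

/-- The regular (Fréchet) subdifferential `∂̂h(x)` of an extended-real-valued function. -/
def frechetSubdiff {X : Type*} [NormedAddCommGroup X] [InnerProductSpace ℝ X]
    (h : X → EReal) (x : X) : Set X :=
  {v | h x ≠ ⊤ ∧ h x ≠ ⊥ ∧ ∀ ε : ℝ, 0 < ε →
      ∀ᶠ w in 𝓝 x, h x + ((⟪v, w - x⟫ - ε * ‖w - x‖ : ℝ) : EReal) ≤ h w}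

/-- The limiting subdifferential `∂h(x)`. -/
def limitingSubdiff {X : Type*} [NormedAddCommGroup X] [InnerProductSpace ℝ X]
    (h : X → EReal) (x : X) : Set X :=
  {v | ∃ u w : ℕ → X, (∀ k, w k ∈ frechetSubdiff h (u k)) ∧
      Tendsto u atTop (𝓝 x) ∧ Tendsto (fun k => h (u k)) atTop (𝓝 (h x)) ∧
      Tendsto w atTop (𝓝 v)}

/-- The Kurdyka-Łojasiewicz property with exponent `θ` (at every point of `dom ∂h`),
with desingularizing function `ψ(s) = ϱ s^{1-θ}`. -/
def HasKLExponent {X : Type*} [NormedAddCommGroup X] [InnerProductSpace ℝ X]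
    (h : X → EReal) (θ : ℝ) : Prop :=
  ∀ xb : X, (limitingSubdiff h xb).Nonempty →
    ∃ ε η ϱ : ℝ, 0 < ε ∧ 0 < η ∧ 0 < ϱ ∧
      ∀ w : X, ‖w - xb‖ < ε → h xb < h w → h w < h xb + ((η : ℝ) : EReal) →
        ∀ v ∈ limitingSubdiff h w,
          1 ≤ ϱ * (1 - θ) * (h w - h xb).toReal ^ (-θ) * ‖v‖

section AuxLemmas
set_option linter.unusedSectionVars false
variable {X : Type*} [NormedAddCommGroup X] [InnerProductSpace ℝ X] [CompleteSpace X]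

/-- Derivative of `t ↦ f (a + t • d)`. -/
lemma line_hasDerivAt (f : X → ℝ) (f' : X → X) (hf : ∀ u, HasGradientAt f (f' u) u)
    (a d : X) (t : ℝ) :
    HasDerivAt (fun s : ℝ => f (a + s • d)) ⟪f' (a + t • d), d⟫ t := by
  have hline : HasDerivAt (fun s : ℝ => a + s • d) d t := by
    simpa using ((hasDerivAt_id t).smul_const d).const_add a
  have := (hf (a + t • d)).hasFDerivAt.comp_hasDerivAt t hline
  simp at this; exact this

/-- Descent lemma. -/
lemma descent_lemma (f : X → ℝ) (f' : X → X) (L : ℝ) (hL : 0 ≤ L)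
    (hf : ∀ u, HasGradientAt f (f' u) u)
    (hlip : ∀ u v, ‖f' u - f' v‖ ≤ L * ‖u - v‖) (a b : X) :
    f b ≤ f a + ⟪f' a, b - a⟫ + L / 2 * ‖b - a‖ ^ 2 := by
  set d := b - a with hd
  set g : ℝ → ℝ := fun t => f (a + t • d) - t * ⟪f' a, d⟫ - L * t ^ 2 / 2 * ‖d‖ ^ 2 with hg
  have hderiv : ∀ t : ℝ, HasDerivAt g (⟪f' (a + t • d), d⟫ - ⟪f' a, d⟫ - L * t * ‖d‖ ^ 2) t := by
    intro t
    have h1 := line_hasDerivAt f f' hf a d t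
    have h2 : HasDerivAt (fun s : ℝ => s * ⟪f' a, d⟫) ⟪f' a, d⟫ t := by
      simpa using (hasDerivAt_id t).mul_const (⟪f' a, d⟫)
    have h3 : HasDerivAt (fun s : ℝ => L * s ^ 2 / 2 * ‖d‖ ^ 2) (L * t * ‖d‖ ^ 2) t := by
      have : HasDerivAt (fun s : ℝ => s ^ 2) (2 * t) t := by
        simpa using hasDerivAt_pow 2 t
      have := ((this.const_mul L).div_const 2).mul_const (‖d‖ ^ 2)
      exact this.congr_deriv (by ring)
    exact (h1.sub h2).sub h3
  have hmono : AntitoneOn g (Icc (0:ℝ) 1) := by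
    apply antitoneOn_of_deriv_nonpos (convex_Icc 0 1)
    · exact fun t _ => ((hderiv t).continuousAt).continuousWithinAt
    · exact fun t _ => ((hderiv t).differentiableAt).differentiableWithinAt
    · intro t ht
      rw [interior_Icc] at ht
      rw [(hderiv t).deriv]
      have h1 : ⟪f' (a + t • d) - f' a, d⟫ ≤ ‖f' (a + t • d) - f' a‖ * ‖d‖ :=
        real_inner_le_norm _ _
      have h2 : ‖f' (a + t • d) - f' a‖ ≤ L * ‖t • d‖ := by simpa using hlip (a + t • d) a
      have h3 : ‖t • d‖ = t * ‖d‖ := by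
        rw [norm_smul, Real.norm_eq_abs, abs_of_pos ht.1]
      rw [inner_sub_left] at h1
      nlinarith [norm_nonneg d, ht.1.le, mul_nonneg hL (norm_nonneg d)]
  have := hmono (left_mem_Icc.2 zero_le_one) (right_mem_Icc.2 zero_le_one) zero_le_one
  simp only [hg] at this
  have hb : a + (1:ℝ) • d = b := by simp [hd]
  rw [hb] at this
  simp at this
  linarith

/-- Strong convexity lower bound. -/
lemma strong_lb (f : X → ℝ) (f' : X → X) (μ : ℝ)
    (hsc : StrongConvexOn Set.univ μ f)
    (hf : ∀ u, HasGradientAt f (f' u) u) (x w : X) :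
    f x + ⟪f' x, w - x⟫ + μ / 2 * ‖w - x‖ ^ 2 ≤ f w := by
  set d := w - x with hd
  have key : ∀ t : ℝ, 0 < t → t < 1 →
      (f (x + t • d) - f x) / t ≤ f w - f x - (1 - t) * (μ / 2 * ‖d‖ ^ 2) := by
    intro t ht0 ht1
    have := hsc.2 (mem_univ x) (mem_univ w) (by linarith : (0:ℝ) ≤ 1 - t) ht0.le
      (by ring : (1 - t) + t = 1)
    have hxw : (1 - t) • x + t • w = x + t • d := by
      simp [hd, smul_sub, sub_smul]; abel
    rw [hxw] at this
    simp only [smul_eq_mul] at this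
    have hnorm : ‖x - w‖ = ‖d‖ := by rw [hd, ← norm_neg]; congr 1; abel
    rw [hnorm] at this
    rw [div_le_iff₀ ht0]
    nlinarith
  have hslope : Tendsto (fun t : ℝ => (f (x + t • d) - f x) / t) (𝓝[>] 0) (𝓝 ⟪f' x, d⟫) := by
    have hD : HasDerivAt (fun s : ℝ => f (x + s • d)) ⟪f' x, d⟫ 0 := by
      have := line_hasDerivAt f f' hf x d 0
      simpa using this
    have := hD.hasDerivWithinAt (s := Ioi (0:ℝ))
    rw [hasDerivWithinAt_iff_tendsto_slope] at this
    have hmem : Ioi (0:ℝ) \ {0} = Ioi 0 := by simp [diff_eq, Set.ext_iff]; intro a ha; linarith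
    rw [show 𝓝[Ioi (0:ℝ) \ {0}] 0 = 𝓝[>] (0:ℝ) by rw [hmem]] at this
    refine this.congr fun t => ?_
    simp [slope_def_field, div_eq_inv_mul]
  have hrhs : Tendsto (fun t : ℝ => f w - f x - (1 - t) * (μ / 2 * ‖d‖ ^ 2)) (𝓝[>] 0)
      (𝓝 (f w - f x - μ / 2 * ‖d‖ ^ 2)) := by
    have : ContinuousAt (fun t : ℝ => f w - f x - (1 - t) * (μ / 2 * ‖d‖ ^ 2)) 0 := by
      fun_prop
    have := this.continuousWithinAt (s := Ioi (0:ℝ))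
    simpa using this.tendsto
  have hle : ⟪f' x, d⟫ ≤ f w - f x - μ / 2 * ‖d‖ ^ 2 := by
    refine le_of_tendsto_of_tendsto hslope hrhs ?_
    filter_upwards [Ioo_mem_nhdsGT one_pos] with t ht
    exact key t ht.1 ht.2
  linarith

/-- Convex-combination norm identity. -/
lemma comb_norm_sq (t : ℝ) (u v : X) :
    ‖(1 - t) • u + t • v‖ ^ 2
      = (1 - t) * ‖u‖ ^ 2 + t * ‖v‖ ^ 2 - t * (1 - t) * ‖u - v‖ ^ 2 := by
  rw [norm_add_sq_real, norm_sub_sq_real, norm_smul, norm_smul,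
    real_inner_smul_left, real_inner_smul_right]
  simp only [Real.norm_eq_abs, mul_pow, sq_abs]
  ring

/-- Per-block quadratic bound. -/
lemma block_quad (a b : ℝ) (hb : 0 < b) (hab : a < b) (u v : X) :
    a * ‖u‖ ^ 2 - b * ‖v‖ ^ 2 ≤ a * b / (b - a) * ‖u - v‖ ^ 2 := by
  have key : (b - a) * (a * ‖u‖ ^ 2 - b * ‖v‖ ^ 2) ≤ a * b * ‖u - v‖ ^ 2 := by
    have h0 : (0:ℝ) ≤ ‖a • u - b • v‖ ^ 2 := sq_nonneg _
    rw [norm_sub_sq_real, norm_smul, norm_smul, real_inner_smul_left,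
      real_inner_smul_right] at h0
    rw [norm_sub_sq_real]
    simp only [Real.norm_eq_abs, mul_pow, sq_abs] at h0 ⊢
    nlinarith
  have hba : 0 < b - a := by linarith
  rw [div_mul_eq_mul_div, le_div_iff₀ hba]
  nlinarith

end AuxLemmas

set_option maxHeartbeats 1000000 in
/-- Theorem 3.6, one-step form: with G convex and fᵢ μ_{f_i}-strongly
convex, the FBE contracts Q-linearly in conditional expectation:
∑_I q_I (φ_Γ(x_I⁺) - min Φ) ≤ (1-c)(φ_Γ(x) - min Φ),
c = minᵢ{ξᵢpᵢ/γᵢ} / maxᵢ{(N-γᵢμᵢ)/(γᵢ²μᵢ)}. -/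
theorem bc_randomized_qlinear_contraction (hN : 0 < N)
    (f : ∀ i, E i → ℝ) (f' : ∀ i, E i → E i) (L γ : Fin N → ℝ)
    (G : PiLp 2 E → EReal)
    (hf : ∀ i (u : E i), HasGradientAt (f i) (f' i u) u)
    (hL : ∀ i, 0 ≤ L i)
    (hlip : ∀ i (u v : E i), ‖f' i u - f' i v‖ ≤ L i * ‖u - v‖)
    (hγ : ∀ i, 0 < γ i) (hγL : ∀ i, γ i * L i < (N : ℝ))
    (hGlsc : LowerSemicontinuous G)
    (hGproper : ∃ w, G w ≠ ⊤) (hGbot : ∀ w, G w ≠ ⊥)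
    (hargmin : ∃ xs : PiLp 2 E, ∀ w, Phi f G xs ≤ Phi f G w)
    (φ : PiLp 2 E → ℝ)
    (hφ : ∀ x, ((φ x : ℝ) : EReal) = ⨅ w, Mdl f f' γ G w x)
    (μ : Fin N → ℝ) (hμ : ∀ i, 0 < μ i)
    (hsc : ∀ i, StrongConvexOn Set.univ (μ i) (f i))
    (hGconv : ERealConvex G)
    (p : Fin N → ℝ) (hp : ∀ i, 0 < p i)
    (q : Finset (Fin N) → ℝ) (hq0 : ∀ I, 0 ≤ q I)
    (hq1 : ∑ I : Finset (Fin N), q I = 1)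
    (hpq : ∀ i : Fin N, p i ≤ ∑ I ∈ Finset.univ.filter (fun I : Finset (Fin N) => i ∈ I), q I)
    (xs : PiLp 2 E) (hxs : ∀ w, Phi f G xs ≤ Phi f G w)
    (m : ℝ) (hm : ((m : ℝ) : EReal) = Phi f G xs)
    (x z : PiLp 2 E) (hz : z ∈ Tmap f f' γ G x) :
    ∑ I : Finset (Fin N), q I * (φ (WithLp.toLp 2 (fun i => if i ∈ I then z i else x i)) - m)
      ≤ (1 - (Finset.univ.inf' (Finset.univ_nonempty_iff.mpr ⟨⟨0, hN⟩⟩)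
              (fun i => (((N : ℝ) - γ i * L i) / (N : ℝ)) * p i / γ i))
            / (Finset.univ.sup' (Finset.univ_nonempty_iff.mpr ⟨⟨0, hN⟩⟩)
              (fun i => ((N : ℝ) - γ i * μ i) / (γ i ^ 2 * μ i)))) * (φ x - m) := by
  classical
  have hNr : (0:ℝ) < (N:ℝ) := by exact_mod_cast hN
  -- real part of the model
  set R : PiLp 2 E → PiLp 2 E → ℝ := fun b w =>
    Fsum f b + (N : ℝ)⁻¹ * ∑ i, ⟪f' i (b i), w i - b i⟫
      + 2⁻¹ * ∑ i, (γ i)⁻¹ * ‖w i - b i‖ ^ 2 with hR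
  have hMdl : ∀ b w, Mdl f f' γ G w b = ((R b w : ℝ) : EReal) + G w := fun _ _ => rfl
  -- the minimum of the model is attained at z
  have hMin : ((φ x : ℝ) : EReal) = Mdl f f' γ G z x := by
    rw [hφ x]
    exact le_antisymm (iInf_le _ z) (le_iInf hz)
  -- G z is finite
  have hGzT : G z ≠ ⊤ := by
    intro h
    rw [hMdl, h, EReal.coe_add_top] at hMin
    exact EReal.coe_ne_top _ hMin
  have hGzB : G z ≠ ⊥ := hGbot z
  set gz : ℝ := (G z).toReal with hgz
  have hGz : G z = ((gz : ℝ) : EReal) := (EReal.coe_toReal hGzT hGzB).symm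
  -- φ x = R x z + gz
  have hφx : φ x = R x z + gz := by
    have := hMin
    rw [hMdl, hGz, ← EReal.coe_add] at this
    exact_mod_cast this
  -- G xs is finite, m = Fsum f xs + gs
  have hPhixs : ((m : ℝ) : EReal) = ((Fsum f xs : ℝ) : EReal) + G xs := hm
  have hGsT : G xs ≠ ⊤ := by
    intro h
    rw [h, EReal.coe_add_top] at hPhixs
    exact EReal.coe_ne_top _ hPhixs
  set gs : ℝ := (G xs).toReal with hgs
  have hGs : G xs = ((gs : ℝ) : EReal) := (EReal.coe_toReal hGsT (hGbot xs)).symm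
  have hmval : m = Fsum f xs + gs := by
    rw [hGs, ← EReal.coe_add] at hPhixs
    exact_mod_cast hPhixs
  -- abbreviations
  set nd : Fin N → ℝ := fun i => ‖z i - x i‖ ^ 2 with hnd
  have hnd0 : ∀ i, 0 ≤ nd i := fun i => sq_nonneg _
  set ξγ : Fin N → ℝ := fun i => (γ i)⁻¹ / 2 - L i * (N : ℝ)⁻¹ / 2 with hξγ
  have hξγ0 : ∀ i, 0 ≤ ξγ i := by
    intro i
    have hγ0 : γ i ≠ 0 := (hγ i).ne'
    have hN0 : (N:ℝ) ≠ 0 := hNr.ne'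
    have key : (γ i)⁻¹ - L i * (N:ℝ)⁻¹ = ((N:ℝ) - γ i * L i) / (γ i * (N:ℝ)) := by
      field_simp
    have h2 : (0:ℝ) ≤ ((N:ℝ) - γ i * L i) / (γ i * (N:ℝ)) :=
      div_nonneg (by linarith [hγL i]) (mul_pos (hγ i) hNr).le
    simp only [hξγ]
    linarith [key ▸ h2]
  set xI : Finset (Fin N) → PiLp 2 E := fun I => WithLp.toLp 2 (fun i => if i ∈ I then z i else x i) with hxI
  -- block representation of R b z
  have hrepr : ∀ b : PiLp 2 E, R b z = ∑ i, ((N:ℝ)⁻¹ * f i (b i)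
      + (N:ℝ)⁻¹ * ⟪f' i (b i), z i - b i⟫ + 2⁻¹ * ((γ i)⁻¹ * ‖z i - b i‖ ^ 2)) := by
    intro b
    simp only [hR, Fsum, Finset.mul_sum, ← Finset.sum_add_distrib]
  -- core per-block inequality (I)
  have hRI : ∀ I : Finset (Fin N), R (xI I) z + ∑ i ∈ I, ξγ i * nd i ≤ R x z := by
    intro I
    rw [hrepr, hrepr]
    have hsplit : ∑ i ∈ I, ξγ i * nd i
        = ∑ i : Fin N, (if i ∈ I then ξγ i * nd i else 0) := by
      rw [Finset.sum_ite_mem, Finset.univ_inter]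
    rw [hsplit, ← Finset.sum_add_distrib]
    apply Finset.sum_le_sum
    intro i _
    by_cases hiI : i ∈ I
    · have hbi : xI I i = z i := by simp [hxI, hiI]
      rw [hbi, if_pos hiI]
      simp only [sub_self, inner_zero_right, norm_zero]
      have hdes := descent_lemma (f i) (f' i) (L i) (hL i) (hf i) (hlip i) (x i) (z i)
      have hNinv : (0:ℝ) < (N:ℝ)⁻¹ := by positivity
      have := mul_le_mul_of_nonneg_left hdes hNinv.le
      simp only [hξγ, hnd]
      rw [mul_add, mul_add] at this
      nlinarith [sq_nonneg ‖z i - x i‖]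
    · have hbi : xI I i = x i := by simp [hxI, hiI]
      rw [hbi, if_neg hiI]
      simp
  -- upper bound on φ (xI I)
  have hub : ∀ I : Finset (Fin N), φ (xI I) ≤ R (xI I) z + gz := by
    intro I
    have h1 : ((φ (xI I) : ℝ) : EReal) ≤ Mdl f f' γ G z (xI I) := by
      rw [hφ (xI I)]
      exact iInf_le _ z
    rw [hMdl, hGz, ← EReal.coe_add] at h1
    exact_mod_cast h1
  -- lower bound : m + ∑ ξγ nd ≤ φ x  (degenerate-case helper)
  have hlowm : m + ∑ i, ξγ i * nd i ≤ φ x := by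
    have hzuniv : xI Finset.univ = z := PiLp.ext fun i => by simp [hxI]
    have h1 := hRI Finset.univ
    rw [hzuniv] at h1
    have h2 : R z z = Fsum f z := by
      simp [hR]
    rw [h2] at h1
    have h3 : ((m : ℝ) : EReal) ≤ ((Fsum f z + gz : ℝ) : EReal) := by
      rw [hm, EReal.coe_add, ← hGz]
      exact hxs z
    have h4 : m ≤ Fsum f z + gz := by exact_mod_cast h3
    rw [hφx]
    linarith
  -- strong convexity chain (II)
  set κ : Fin N → ℝ := fun i => ((N : ℝ) - γ i * μ i) / (γ i ^ 2 * μ i) with hκ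
  have hII : φ x ≤ m + ∑ i, κ i / 2 * nd i := by
    set Pz : ℝ := 2⁻¹ * ∑ i, (γ i)⁻¹ * ‖xs i - z i‖ ^ 2 with hPz
    have hPz0 : 0 ≤ Pz := by
      apply mul_nonneg (by norm_num)
      apply Finset.sum_nonneg
      intro i _
      exact mul_nonneg (inv_nonneg.2 (hγ i).le) (sq_nonneg _)
    -- strong convexity inequality at the minimizer of the model
    have hstar : R x z + gz + Pz ≤ R x xs + gs := by
      apply le_of_forall_pos_le_add
      intro ε hε
      set t : ℝ := min 2⁻¹ (ε / (Pz + 1)) with htdef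
      have ht0 : 0 < t := lt_min (by norm_num) (div_pos hε (by linarith))
      have ht1 : t ≤ 2⁻¹ := min_le_left _ _
      have htP : t * Pz ≤ ε := by
        have h1 : t ≤ ε / (Pz + 1) := min_le_right _ _
        have h2 : t * (Pz + 1) ≤ ε := by
          rw [← le_div_iff₀ (by linarith : (0:ℝ) < Pz + 1)]
          exact h1
        nlinarith
      set wt : PiLp 2 E := (1 - t) • z + t • xs with hwt
      -- convexity of G
      have hGc : G wt ≤ (((1 - t) * gz + t * gs : ℝ) : EReal) := by
        have := hGconv z xs (1 - t) t (by linarith) ht0.le (by ring)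
        rwa [hGz, hGs, ← EReal.coe_mul, ← EReal.coe_mul, ← EReal.coe_add] at this
      have hGwT : G wt ≠ ⊤ := ne_top_of_le_ne_top (EReal.coe_ne_top _) hGc
      set gwt : ℝ := (G wt).toReal with hgwt
      have hGw : G wt = ((gwt : ℝ) : EReal) := (EReal.coe_toReal hGwT (hGbot wt)).symm
      have hgtle : gwt ≤ (1 - t) * gz + t * gs := by
        rw [hGw] at hGc
        exact_mod_cast hGc
      -- minimality of z in the model
      have hmdl : R x z + gz ≤ R x wt + gwt := by
        have := hz wt
        rw [hMdl, hMdl, hGz, hGw, ← EReal.coe_add, ← EReal.coe_add] at this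
        exact_mod_cast this
      -- quadratic identity
      have hwti : ∀ i, wt i - x i = (1 - t) • (z i - x i) + t • (xs i - x i) := by
        intro i
        have happ : wt i = (1 - t) • z i + t • xs i := rfl
        rw [happ]
        module
      have hs1 : ∑ i, ⟪f' i (x i), wt i - x i⟫
          = (1 - t) * ∑ i, ⟪f' i (x i), z i - x i⟫
            + t * ∑ i, ⟪f' i (x i), xs i - x i⟫ := by
        rw [Finset.mul_sum, Finset.mul_sum, ← Finset.sum_add_distrib]
        refine Finset.sum_congr rfl fun i _ => ?_
        rw [hwti i, inner_add_right, real_inner_smul_right, real_inner_smul_right]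
      have hs2 : ∑ i, (γ i)⁻¹ * ‖wt i - x i‖ ^ 2
          = (1 - t) * ∑ i, (γ i)⁻¹ * ‖z i - x i‖ ^ 2
            + t * ∑ i, (γ i)⁻¹ * ‖xs i - x i‖ ^ 2
            - t * (1 - t) * ∑ i, (γ i)⁻¹ * ‖xs i - z i‖ ^ 2 := by
        simp only [Finset.mul_sum]
        rw [← Finset.sum_add_distrib, ← Finset.sum_sub_distrib]
        refine Finset.sum_congr rfl fun i _ => ?_
        rw [hwti i, comb_norm_sq]
        have hzz : z i - x i - (xs i - x i) = z i - xs i := by abel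
        rw [hzz, norm_sub_rev (z i) (xs i)]
        ring
      have hQ : R x wt = (1 - t) * R x z + t * R x xs - t * (1 - t) * Pz := by
        simp only [hR]
        rw [hs1, hs2]
        simp only [hPz]
        ring
      rw [hQ] at hmdl
      -- rearrange and use t > 0
      have ht' : t * (R x z + gz) ≤ t * ((R x xs + gs) - (1 - t) * Pz) := by
        ring_nf
        ring_nf at hmdl hgtle
        linarith
      have ht'' : R x z + gz ≤ R x xs + gs - (1 - t) * Pz :=
        (mul_le_mul_iff_right₀ ht0).mp ht'
      have hfin : (1 - t) * Pz ≥ Pz - ε := by nlinarith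
      linarith
    -- strong convexity of F
    have hkey : Fsum f x + (N : ℝ)⁻¹ * ∑ i, ⟪f' i (x i), xs i - x i⟫
        + (N : ℝ)⁻¹ * ∑ i, μ i / 2 * ‖xs i - x i‖ ^ 2 ≤ Fsum f xs := by
      simp only [Fsum, Finset.mul_sum, ← Finset.sum_add_distrib]
      apply Finset.sum_le_sum
      intro i _
      have h1 := strong_lb (f i) (f' i) (μ i) (hsc i) (hf i) (x i) (xs i)
      have h2 := mul_le_mul_of_nonneg_left h1 (inv_nonneg.2 hNr.le)
      rw [mul_add, mul_add] at h2
      linarith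
    -- per-block quadratic bound
    have hblk : ∑ i, (((γ i)⁻¹ / 2 - μ i * (N:ℝ)⁻¹ / 2) * ‖xs i - x i‖ ^ 2
          - 2⁻¹ * (γ i)⁻¹ * ‖xs i - z i‖ ^ 2)
        ≤ ∑ i, κ i / 2 * nd i := by
      apply Finset.sum_le_sum
      intro i _
      have hb : (0:ℝ) < 2⁻¹ * (γ i)⁻¹ := by
        have := hγ i
        positivity
      have hab : (γ i)⁻¹ / 2 - μ i * (N:ℝ)⁻¹ / 2 < 2⁻¹ * (γ i)⁻¹ := by
        have h1 : 0 < μ i * (N:ℝ)⁻¹ / 2 := by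
          have := hμ i
          positivity
        have h2 : (γ i)⁻¹ / 2 = 2⁻¹ * (γ i)⁻¹ := by ring
        linarith
      have hbq := block_quad ((γ i)⁻¹ / 2 - μ i * (N:ℝ)⁻¹ / 2) (2⁻¹ * (γ i)⁻¹) hb hab
        (xs i - x i) (xs i - z i)
      have huv : xs i - x i - (xs i - z i) = z i - x i := by abel
      rw [huv] at hbq
      have hconst : ((γ i)⁻¹ / 2 - μ i * (N:ℝ)⁻¹ / 2) * (2⁻¹ * (γ i)⁻¹)
          / (2⁻¹ * (γ i)⁻¹ - ((γ i)⁻¹ / 2 - μ i * (N:ℝ)⁻¹ / 2)) = κ i / 2 := by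
        have hγ0 : γ i ≠ 0 := (hγ i).ne'
        have hμ0 : μ i ≠ 0 := (hμ i).ne'
        have hN0 : (N:ℝ) ≠ 0 := hNr.ne'
        simp only [hκ]
        rw [show 2⁻¹ * (γ i)⁻¹ - ((γ i)⁻¹ / 2 - μ i * (N:ℝ)⁻¹ / 2) = μ i * (N:ℝ)⁻¹ / 2 by ring]
        field_simp
      rw [hconst] at hbq
      simp only [hnd]
      linarith
    -- assemble
    have hPzsum : Pz = ∑ i, 2⁻¹ * (γ i)⁻¹ * ‖xs i - z i‖ ^ 2 := by
      simp only [hPz, Finset.mul_sum]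
      exact Finset.sum_congr rfl fun i _ => by ring
    have hRxxs : R x xs ≤ Fsum f xs
        + ∑ i, ((γ i)⁻¹ / 2 - μ i * (N:ℝ)⁻¹ / 2) * ‖xs i - x i‖ ^ 2 := by
      simp only [hR]
      have h2q : 2⁻¹ * ∑ i, (γ i)⁻¹ * ‖xs i - x i‖ ^ 2
          = ∑ i, (γ i)⁻¹ / 2 * ‖xs i - x i‖ ^ 2 := by
        rw [Finset.mul_sum]
        exact Finset.sum_congr rfl fun i _ => by ring
      have hsplit : ∑ i, ((γ i)⁻¹ / 2 - μ i * (N:ℝ)⁻¹ / 2) * ‖xs i - x i‖ ^ 2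
          = ∑ i, (γ i)⁻¹ / 2 * ‖xs i - x i‖ ^ 2
            - (N:ℝ)⁻¹ * ∑ i, μ i / 2 * ‖xs i - x i‖ ^ 2 := by
        rw [Finset.mul_sum, ← Finset.sum_sub_distrib]
        exact Finset.sum_congr rfl fun i _ => by ring
      rw [hsplit, ← h2q]
      linarith
    have hsum_split : ∑ i, (((γ i)⁻¹ / 2 - μ i * (N:ℝ)⁻¹ / 2) * ‖xs i - x i‖ ^ 2
          - 2⁻¹ * (γ i)⁻¹ * ‖xs i - z i‖ ^ 2)
        = ∑ i, ((γ i)⁻¹ / 2 - μ i * (N:ℝ)⁻¹ / 2) * ‖xs i - x i‖ ^ 2 - Pz := by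
      rw [Finset.sum_sub_distrib, hPzsum]
    rw [hφx, hmval]
    have hfin := hblk
    rw [hsum_split] at hfin
    have chk1 : R x z + gz ≤ R x xs + gs - Pz := by linarith
    have chk2 : R x xs + gs - Pz ≤ Fsum f xs + gs
        + (∑ i, ((γ i)⁻¹ / 2 - μ i * (N:ℝ)⁻¹ / 2) * ‖xs i - x i‖ ^ 2 - Pz) := by linarith
    have chk3 : (∑ i, ((γ i)⁻¹ / 2 - μ i * (N:ℝ)⁻¹ / 2) * ‖xs i - x i‖ ^ 2 - Pz)
        ≤ ∑ i, κ i / 2 * nd i := hfin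
    show R x z + gz ≤ Fsum f xs + gs + ∑ i, κ i / 2 * nd i
    exact le_trans chk1 (le_trans chk2 (add_le_add_right chk3 (Fsum f xs + gs)))
  -- final assembly
  set cmin : ℝ := Finset.univ.inf' (Finset.univ_nonempty_iff.mpr ⟨⟨0, hN⟩⟩)
      (fun i => (((N : ℝ) - γ i * L i) / (N : ℝ)) * p i / γ i) with hcmin
  set cmax : ℝ := Finset.univ.sup' (Finset.univ_nonempty_iff.mpr ⟨⟨0, hN⟩⟩) κ with hcmax
  have hterm : ∀ i, (((N : ℝ) - γ i * L i) / (N : ℝ)) * p i / γ i = 2 * ξγ i * p i := by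
    intro i
    have hγ0 : γ i ≠ 0 := (hγ i).ne'
    have hN0 : (N:ℝ) ≠ 0 := hNr.ne'
    simp only [hξγ]
    field_simp
  have hcmin_pos : 0 < cmin := by
    rw [hcmin, Finset.lt_inf'_iff]
    intro i _
    exact div_pos (mul_pos (div_pos (by linarith [hγL i]) hNr) (hp i)) (hγ i)
  have hcmin_le : ∀ i, cmin ≤ 2 * ξγ i * p i := by
    intro i
    rw [← hterm i]
    exact Finset.inf'_le _ (Finset.mem_univ i)
  have hcmax_ge : ∀ i, κ i ≤ cmax := fun i => Finset.le_sup' _ (Finset.mem_univ i)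
  -- per-subset decrease of the FBE
  have hφI : ∀ I : Finset (Fin N), φ (xI I) ≤ φ x - ∑ i ∈ I, ξγ i * nd i := by
    intro I
    have h1 := hub I
    have h2 := hRI I
    rw [hφx]
    linarith
  set S : ℝ := 2⁻¹ * ∑ i, nd i with hS
  have hS0 : 0 ≤ S := by
    apply mul_nonneg (by norm_num)
    exact Finset.sum_nonneg fun i _ => hnd0 i
  have hsum_nd : 0 ≤ ∑ i, ξγ i * nd i :=
    Finset.sum_nonneg fun i _ => mul_nonneg (hξγ0 i) (hnd0 i)
  -- expectation bound
  have key1 : ∑ I : Finset (Fin N), q I * (φ (WithLp.toLp 2 (fun i => if i ∈ I then z i else x i)) - m)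
      ≤ ∑ I : Finset (Fin N), q I * ((φ x - m) - ∑ i ∈ I, ξγ i * nd i) := by
    apply Finset.sum_le_sum
    intro I _
    apply mul_le_mul_of_nonneg_left _ (hq0 I)
    have := hφI I
    have hxeq : φ (WithLp.toLp 2 (fun i => if i ∈ I then z i else x i)) = φ (xI I) := rfl
    rw [hxeq]
    linarith
  have key2 : ∑ I : Finset (Fin N), q I * ((φ x - m) - ∑ i ∈ I, ξγ i * nd i)
      = (φ x - m) - ∑ I : Finset (Fin N), q I * ∑ i ∈ I, ξγ i * nd i := by
    simp only [mul_sub]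
    rw [Finset.sum_sub_distrib, Finset.sum_sub_distrib, ← Finset.sum_mul, ← Finset.sum_mul,
      hq1]
    ring
  have hswap : ∑ I : Finset (Fin N), q I * ∑ i ∈ I, ξγ i * nd i
      = ∑ i, (∑ I ∈ Finset.univ.filter (fun I : Finset (Fin N) => i ∈ I), q I)
          * (ξγ i * nd i) := by
    have h1 : ∀ I : Finset (Fin N), q I * ∑ i ∈ I, ξγ i * nd i
        = ∑ i : Fin N, if i ∈ I then q I * (ξγ i * nd i) else 0 := by
      intro I
      symm
      rw [Finset.sum_ite_mem, Finset.univ_inter, ← Finset.mul_sum]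
    rw [Finset.sum_congr rfl fun I _ => h1 I, Finset.sum_comm]
    refine Finset.sum_congr rfl fun i _ => ?_
    rw [Finset.sum_filter, Finset.sum_mul]
    refine Finset.sum_congr rfl fun I _ => ?_
    by_cases hiI : i ∈ I <;> simp [hiI]
  have hlb : cmin * S ≤ ∑ i, (∑ I ∈ Finset.univ.filter (fun I : Finset (Fin N) => i ∈ I), q I)
      * (ξγ i * nd i) := by
    have hstep : ∀ i : Fin N, cmin * (2⁻¹ * nd i)
        ≤ (∑ I ∈ Finset.univ.filter (fun I : Finset (Fin N) => i ∈ I), q I) * (ξγ i * nd i) := by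
      intro i
      have h1 : cmin * (2⁻¹ * nd i) ≤ (2 * ξγ i * p i) * (2⁻¹ * nd i) :=
        mul_le_mul_of_nonneg_right (hcmin_le i)
          (mul_nonneg (by norm_num) (hnd0 i))
      have h2 : (2 * ξγ i * p i) * (2⁻¹ * nd i) = p i * (ξγ i * nd i) := by ring
      have h3 : p i * (ξγ i * nd i)
          ≤ (∑ I ∈ Finset.univ.filter (fun I : Finset (Fin N) => i ∈ I), q I)
            * (ξγ i * nd i) :=
        mul_le_mul_of_nonneg_right (hpq i) (mul_nonneg (hξγ0 i) (hnd0 i))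
      exact (h1.trans_eq h2).trans h3
    have h4 : cmin * S = ∑ i, cmin * (2⁻¹ * nd i) := by
      rw [hS, Finset.mul_sum, Finset.mul_sum]
    rw [h4]
    exact Finset.sum_le_sum fun i _ => hstep i
  have main1 : ∑ I : Finset (Fin N), q I * (φ (WithLp.toLp 2 (fun i => if i ∈ I then z i else x i)) - m)
      ≤ (φ x - m) - cmin * S := by
    have h := key1
    rw [key2, hswap] at h
    exact h.trans (sub_le_sub_left hlb _)
  have main2 : φ x - m ≤ cmax * S := by
    have h1 : ∑ i, κ i / 2 * nd i ≤ ∑ i, cmax / 2 * nd i :=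
      Finset.sum_le_sum fun i _ =>
        mul_le_mul_of_nonneg_right (by linarith [hcmax_ge i]) (hnd0 i)
    have h2 : ∑ i, cmax / 2 * nd i = cmax * S := by
      rw [hS, Finset.mul_sum, Finset.mul_sum]
      exact Finset.sum_congr rfl fun i _ => by ring
    have h3 := hII
    rw [← h2]
    linarith
  rcases le_or_gt cmax 0 with hc0 | hc0
  · -- degenerate case : all blocks trivial
    have hk0 : ∑ i, κ i / 2 * nd i ≤ 0 :=
      Finset.sum_nonpos fun i _ =>
        mul_nonpos_of_nonpos_of_nonneg (by linarith [hcmax_ge i]) (hnd0 i)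
    have hD0 : φ x - m = 0 := by
      have h1 := hII
      have h2 := hlowm
      linarith
    rw [hD0, mul_zero]
    have h := main1
    rw [hD0] at h
    have h2 : 0 - cmin * S ≤ 0 := by
      have := mul_nonneg hcmin_pos.le hS0
      linarith
    exact h.trans h2
  · -- main case
    have hDS : cmin * ((φ x - m) / cmax) ≤ cmin * S := by
      apply mul_le_mul_of_nonneg_left _ hcmin_pos.le
      rw [div_le_iff₀ hc0, mul_comm]
      exact main2
    have heq : (1 - cmin / cmax) * (φ x - m) = (φ x - m) - cmin * ((φ x - m) / cmax) := by
      ring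
    rw [heq]
    exact main1.trans (sub_le_sub_left hDS _)
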